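/- arXiv:1012.3010 — 5 statements merged into one kernel-verified Lean document; each statement's English description precedes it below -/
import Mathlib

section
/- Let S be a local ring with maximal ideal 𝔫, (x,y) a pair of exact zero-divisors, and M a finitely generated S-module with x·M = 0. If Tor_n^S(S/(x), M) = 0 for all sufficiently large n, then M = 0. -/
open CategoryTheory

namespace Stmt5Aux
open CategoryTheory CategoryTheory.Limits MonoidalCategory HomologicalComplex

variable {S : Type} [CommRing S]

/-- Multiplication by `x`, as a map `S/(y) ⟶ S`. -/
noncomputable def fmul (x y : S) (hx : Ideal.torsionOf S S x = Ideal.span {y}) :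
    ModuleCat.of S (S ⧸ Ideal.span {y}) ⟶ ModuleCat.of S S :=
  ModuleCat.ofHom ((Ideal.span {y}).liftQ (LinearMap.toSpanSingleton S S x) (le_of_eq hx.symm))

noncomputable def gq (x : S) : ModuleCat.of S S ⟶ ModuleCat.of S (S ⧸ Ideal.span {x}) :=
  ModuleCat.ofHom (Ideal.span {x}).mkQ

noncomputable def ses (x y : S) (hx : Ideal.torsionOf S S x = Ideal.span {y}) :
    ShortComplex (ModuleCat S) :=
  ShortComplex.mk (fmul x y hx) (gq x) (by
    refine ModuleCat.hom_ext (Submodule.linearMap_qext _ (LinearMap.ext_ring ?_))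
    show Submodule.Quotient.mk ((Ideal.span {y}).liftQ (LinearMap.toSpanSingleton S S x)
      (le_of_eq hx.symm) (Submodule.Quotient.mk 1)) = (0 : S ⧸ Ideal.span {x})
    rw [Submodule.liftQ_apply, LinearMap.toSpanSingleton_apply, Submodule.Quotient.mk_eq_zero,
      one_smul]
    exact Ideal.mem_span_singleton_self x)

lemma ses_shortExact (x y : S) (hx : Ideal.torsionOf S S x = Ideal.span {y}) :
    (ses x y hx).ShortExact := by
  have hmono : Mono (ses x y hx).f := by
    rw [ModuleCat.mono_iff_injective]
    rw [show (ses x y hx).f = fmul x y hx from rfl]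
    exact LinearMap.ker_eq_bot.1 (Submodule.ker_liftQ_eq_bot _ _ _ (le_of_eq hx))
  have hepi : Epi (ses x y hx).g := by
    rw [ModuleCat.epi_iff_surjective]
    exact Submodule.mkQ_surjective _
  exact { exact := by
            rw [ShortComplex.moduleCat_exact_iff_range_eq_ker]
            show LinearMap.range ((Ideal.span {y}).liftQ (LinearMap.toSpanSingleton S S x)
              (le_of_eq hx.symm)) = LinearMap.ker (Ideal.span {x}).mkQ
            rw [Submodule.range_liftQ, Submodule.ker_mkQ, ← LinearMap.span_singleton_eq_range]
          mono_f := hmono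
          epi_g := hepi }

lemma key0 (x y : S) (hx : Ideal.torsionOf S S x = Ideal.span {y})
    (N : ModuleCat S) (hN : ∀ n : N, x • n = 0) :
    ((tensoringLeft (ModuleCat S)).map (fmul x y hx)).app N = 0 := by
  show fmul x y hx ▷ N = 0
  refine ModuleCat.hom_ext <| TensorProduct.ext' fun a m => ?_
  obtain ⟨a, rfl⟩ := Submodule.Quotient.mk_surjective _ a
  show (fmul x y hx ▷ N) (Submodule.Quotient.mk a ⊗ₜ m) = 0
  rw [ModuleCat.MonoidalCategory.whiskerRight_apply]
  have : (fmul x y hx) (Submodule.Quotient.mk a) = a • x := by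
    rfl
  rw [this, show a • x = x • a by rw [smul_eq_mul, smul_eq_mul, mul_comm],
    TensorProduct.smul_tmul, hN, TensorProduct.tmul_zero]

noncomputable abbrev KC (A : ModuleCat S) (K : ChainComplex (ModuleCat S) ℕ) :
    ChainComplex (ModuleCat S) ℕ :=
  (((tensoringLeft (ModuleCat S)).obj A).mapHomologicalComplex (ComplexShape.down ℕ)).obj K

noncomputable def phiF (x y : S) (hx : Ideal.torsionOf S S x = Ideal.span {y})
    (K : ChainComplex (ModuleCat S) ℕ) :
    KC (ModuleCat.of S (S ⧸ Ideal.span {y})) K ⟶ KC (ModuleCat.of S S) K :=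
  (NatTrans.mapHomologicalComplex ((tensoringLeft (ModuleCat S)).map (fmul x y hx))
    (ComplexShape.down ℕ)).app K

noncomputable def phiG (x : S) (K : ChainComplex (ModuleCat S) ℕ) :
    KC (ModuleCat.of S S) K ⟶ KC (ModuleCat.of S (S ⧸ Ideal.span {x})) K :=
  (NatTrans.mapHomologicalComplex ((tensoringLeft (ModuleCat S)).map (gq x))
    (ComplexShape.down ℕ)).app K

noncomputable def SCC (x y : S) (hx : Ideal.torsionOf S S x = Ideal.span {y})
    (K : ChainComplex (ModuleCat S) ℕ) :
    ShortComplex (HomologicalComplex (ModuleCat S) (ComplexShape.down ℕ)) :=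
  ShortComplex.mk (phiF x y hx K) (phiG x K) (by
    apply HomologicalComplex.hom_ext
    intro i
    show (fmul x y hx) ▷ (K.X i) ≫ (gq x) ▷ (K.X i) = 0
    rw [← MonoidalCategory.comp_whiskerRight,
      show fmul x y hx ≫ gq x = 0 from (ses x y hx).zero,
      MonoidalPreadditive.zero_whiskerRight])

lemma scc_shortExact (x y : S) (hx : Ideal.torsionOf S S x = Ideal.span {y})
    (K : ChainComplex (ModuleCat S) ℕ) (hK : ∀ i, Projective (K.X i)) :
    (SCC x y hx K).ShortExact := by
  rw [HomologicalComplex.shortExact_iff_degreewise_shortExact]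
  intro i
  haveI : Projective (K.X i) := hK i
  haveI hproj : Module.Projective S (K.X i) := by
    have h2 : Projective (ModuleCat.of S ↥(K.X i)) := hK i
    exact (IsProjective.iff_projective _).2 h2
  haveI hflat : Module.Flat S (K.X i) := Module.Flat.of_projective
  have hexact : (((ses x y hx).map (tensorRight (K.X i)))).Exact :=
    Module.Flat.rTensor_shortComplex_exact (K.X i) _ (ses_shortExact x y hx).exact
  have hmono : Mono ((SCC x y hx K).map (HomologicalComplex.eval _ _ i)).f := by
    rw [ModuleCat.mono_iff_injective]
    show Function.Injective ((fmul x y hx).hom.rTensor (K.X i))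
    exact Module.Flat.rTensor_preserves_injective_linearMap _
      ((ModuleCat.mono_iff_injective _).1 (ses_shortExact x y hx).mono_f)
  have hepi : Epi ((SCC x y hx K).map (HomologicalComplex.eval _ _ i)).g := by
    rw [ModuleCat.epi_iff_surjective]
    show Function.Surjective ((gq x).hom.rTensor (K.X i))
    exact LinearMap.rTensor_surjective _
      ((ModuleCat.epi_iff_surjective _).1 (ses_shortExact x y hx).epi_g)
  exact { exact := hexact, mono_f := hmono, epi_g := hepi }

lemma step (x y : S) (hx : Ideal.torsionOf S S x = Ideal.span {y})
    (K : ChainComplex (ModuleCat S) ℕ) (hK : ∀ i, Projective (K.X i)) (n : ℕ)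
    (hzero : HomologicalComplex.homologyMap (phiF x y hx K) n = 0)
    (h : Subsingleton ((KC (ModuleCat.of S (S ⧸ Ideal.span {x})) K).homology (n+1))) :
    Subsingleton ((KC (ModuleCat.of S (S ⧸ Ideal.span {y})) K).homology n) := by
  have hSC := scc_shortExact x y hx K hK
  have hex := hSC.homology_exact₁ (n+1) n rfl
  have hepi : Epi (hSC.δ (n+1) n rfl) := hex.epi_f hzero
  have hs : Function.Surjective (hSC.δ (n+1) n rfl) :=
    (ModuleCat.epi_iff_surjective _).1 hepi
  haveI : Subsingleton ((SCC x y hx K).X₃.homology (n+1)) := h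
  exact hs.subsingleton

lemma ks_isZero (K : ChainComplex (ModuleCat S) ℕ)
    (hexK : ∀ n, (ShortComplex.mk (K.d (n+2) (n+1)) (K.d (n+1) n)
      (K.d_comp_d _ _ _)).Exact) (n : ℕ) :
    IsZero ((KC (ModuleCat.of S S) K).homology (n+1)) := by
  rw [← HomologicalComplex.exactAt_iff_isZero_homology]
  rw [HomologicalComplex.exactAt_iff' _ (n+2) (n+1) n (by simp) (by simp)]
  haveI : Module.Flat S (ModuleCat.of S S) := inferInstanceAs (Module.Flat S S)
  have h1 := Module.Flat.lTensor_shortComplex_exact (ModuleCat.of S S) _ (hexK n)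
  refine (ShortComplex.exact_iff_of_iso
    (ShortComplex.isoMk (Iso.refl _) (Iso.refl _) (Iso.refl _) ?_ ?_)).1 h1
  · simp only [Iso.refl_hom, Category.id_comp, Category.comp_id]
  · simp only [Iso.refl_hom, Category.id_comp, Category.comp_id]

lemma hzero0 (x y : S) (hx : Ideal.torsionOf S S x = Ideal.span {y})
    (Mc : ModuleCat S) (hxMc : ∀ m : Mc, x • m = 0) (P : ProjectiveResolution Mc) :
    HomologicalComplex.homologyMap (phiF x y hx P.complex) 0 = 0 := by
  haveI : PreservesFiniteColimits ((tensoringLeft (ModuleCat S)).obj (ModuleCat.of S S)) :=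
    inferInstanceAs (PreservesFiniteColimits (tensorLeft (ModuleCat.of S S)))
  have hsingle : ∀ z : (((ChainComplex.single₀ (ModuleCat S)).obj Mc).X 0), x • z = 0 := by
    intro z
    have e := HomologicalComplex.singleObjXSelf (ComplexShape.down ℕ) 0 Mc
    have hinj : Function.Injective e.hom := (ModuleCat.mono_iff_injective _).1 inferInstance
    apply hinj
    rw [map_smul, map_zero]
    exact hxMc _
  have h1 : HomologicalComplex.opcyclesMap (phiF x y hx P.complex) 0 ≫
      P.fromLeftDerivedZero' ((tensoringLeft (ModuleCat S)).obj (ModuleCat.of S S)) = 0 := by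
    rw [← cancel_epi (HomologicalComplex.pOpcycles _ 0),
      HomologicalComplex.p_opcyclesMap_assoc,
      ProjectiveResolution.pOpcycles_comp_fromLeftDerivedZero', comp_zero]
    show ((tensoringLeft (ModuleCat S)).map (fmul x y hx)).app (P.complex.X 0) ≫ _ = 0
    refine (((tensoringLeft (ModuleCat S)).map (fmul x y hx)).naturality (P.π.f 0)).symm.trans ?_
    rw [key0 x y hx _ hsingle, comp_zero]
    rfl
  have h2 : HomologicalComplex.opcyclesMap (phiF x y hx P.complex) 0 = 0 := by
    rw [← cancel_mono (P.fromLeftDerivedZero'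
      ((tensoringLeft (ModuleCat S)).obj (ModuleCat.of S S))), zero_comp]
    exact h1
  rw [← cancel_epi ((ChainComplex.isoHomologyι₀ _).inv), comp_zero,
    ChainComplex.isoHomologyι₀_inv_naturality, h2, zero_comp]

lemma main (x y : S) (hx : Ideal.torsionOf S S x = Ideal.span {y})
    (hy : Ideal.torsionOf S S y = Ideal.span {x})
    (M : Type) [AddCommGroup M] [Module S M]
    (hxM : ∀ m : M, x • m = 0) (n₀ : ℕ)
    (hsub : Subsingleton (((Tor (ModuleCat S) (2*n₀+1)).obj
      (ModuleCat.of S (S ⧸ Ideal.span {x}))).obj (ModuleCat.of S M))) :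
    Subsingleton (M ⧸ (Ideal.span {y} • (⊤ : Submodule S M))) := by
  let Mc : ModuleCat S := ModuleCat.of S M
  let P : ProjectiveResolution Mc := projectiveResolution Mc
  have hK : ∀ i, Projective (P.complex.X i) := fun i => P.projective i
  have h1 : Subsingleton
      ((KC (ModuleCat.of S (S ⧸ Ideal.span {x})) P.complex).homology (2*n₀+1)) := by
    have hepi : Function.Surjective ((P.isoLeftDerivedObj
        ((tensoringLeft (ModuleCat S)).obj (ModuleCat.of S (S ⧸ Ideal.span {x})))
        (2*n₀+1)).hom) := (ModuleCat.epi_iff_surjective _).1 inferInstance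
    haveI : Subsingleton ((((tensoringLeft (ModuleCat S)).obj
        (ModuleCat.of S (S ⧸ Ideal.span {x}))).leftDerived (2*n₀+1)).obj Mc) := hsub
    exact hepi.subsingleton
  have hexK : ∀ n, (ShortComplex.mk (P.complex.d (n+2) (n+1)) (P.complex.d (n+1) n)
      (P.complex.d_comp_d _ _ _)).Exact := fun n => P.exact_succ n
  have desc : ∀ k,
      Subsingleton ((KC (ModuleCat.of S (S ⧸ Ideal.span {x})) P.complex).homology (2*k+1)) →
      Subsingleton ((KC (ModuleCat.of S (S ⧸ Ideal.span {x})) P.complex).homology 1) := by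
    intro k
    induction k with
    | zero => intro h; simpa using h
    | succ k ih =>
      intro h
      apply ih
      have e : 2*(k+1)+1 = ((2*k+1)+1)+1 := by ring
      rw [e] at h
      have hb := step x y hx P.complex hK ((2*k+1)+1)
        ((ks_isZero P.complex hexK (2*k+1)).eq_of_tgt _ _) h
      exact step y x hy P.complex hK (2*k+1)
        ((ks_isZero P.complex hexK (2*k)).eq_of_tgt _ _) hb
  have h2 : Subsingleton ((KC (ModuleCat.of S (S ⧸ Ideal.span {y})) P.complex).homology 0) :=
    step x y hx P.complex hK 0 (hzero0 x y hx Mc hxM P) (desc n₀ h1)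
  haveI : PreservesFiniteColimits
      ((tensoringLeft (ModuleCat S)).obj (ModuleCat.of S (S ⧸ Ideal.span {y}))) :=
    inferInstanceAs (PreservesFiniteColimits (tensorLeft (ModuleCat.of S (S ⧸ Ideal.span {y}))))
  have hsurj : Function.Surjective
      ((ChainComplex.isoHomologyι₀ (KC (ModuleCat.of S (S ⧸ Ideal.span {y})) P.complex)).hom ≫
        P.fromLeftDerivedZero' ((tensoringLeft (ModuleCat S)).obj
          (ModuleCat.of S (S ⧸ Ideal.span {y})))) :=
    (ModuleCat.epi_iff_surjective _).1 inferInstance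
  haveI := h2
  have h4 : Subsingleton (TensorProduct S (S ⧸ Ideal.span {y}) M) := hsurj.subsingleton
  haveI := h4
  exact (TensorProduct.quotTensorEquivQuotSMul M (Ideal.span {y})).symm.toEquiv.subsingleton

end Stmt5Aux

/-- Let `S` be a Noetherian local ring, `(x, y)` a pair of exact zero-divisors lying in the
maximal ideal, and `M` a finitely generated `S`-module with `x • M = 0`.  If
`Tor_n^S(S/(x), M) = 0` for all sufficiently large `n`, then `M = 0`. -/
theorem stmt_5 (S : Type) [CommRing S] [IsNoetherianRing S] [IsLocalRing S] (x y : S)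
    (hxm : x ∈ IsLocalRing.maximalIdeal S) (hym : y ∈ IsLocalRing.maximalIdeal S)
    (hx : Ideal.torsionOf S S x = Ideal.span {y})
    (hy : Ideal.torsionOf S S y = Ideal.span {x})
    (M : Type) [AddCommGroup M] [Module S M] [Module.Finite S M]
    (hxM : ∀ m : M, x • m = 0)
    (htor : ∃ n₀ : ℕ, ∀ n ≥ n₀,
      Subsingleton (((Tor (ModuleCat S) n).obj (ModuleCat.of S (S ⧸ Ideal.span {x}))).obj
        (ModuleCat.of S M))) :
    ∀ m : M, m = 0 := by
  obtain ⟨n₀, htor⟩ := htor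
  have hsub := htor (2*n₀+1) (by omega)
  have hq := Stmt5Aux.main x y hx hy M hxM n₀ hsub
  have htop : Ideal.span {y} • (⊤ : Submodule S M) = ⊤ :=
    Submodule.Quotient.subsingleton_iff.1 hq
  have hbot : (⊤ : Submodule S M) = ⊥ := by
    apply Submodule.eq_bot_of_le_smul_of_le_jacobson_bot (IsLocalRing.maximalIdeal S) ⊤
      Module.Finite.fg_top
    · calc (⊤ : Submodule S M) = Ideal.span {y} • ⊤ := htop.symm
        _ ≤ IsLocalRing.maximalIdeal S • ⊤ :=
          Submodule.smul_mono_left (Ideal.span_le.2 (Set.singleton_subset_iff.2 hym))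
    · exact IsLocalRing.maximalIdeal_le_jacobson ⊥
  intro m
  have hm : m ∈ (⊥ : Submodule S M) := hbot ▸ Submodule.mem_top
  simpa using hm
end

section
/- Let S be a local ring and (x,y) a pair of exact zero-divisors. Then every nonzero finitely generated module M over R = S/(x) has infinite projective dimension as an S-module. -/
open CategoryTheory

section Aux

variable {S : Type} [CommRing S]

private lemma ann_smul_proj {x y : S}
    (hxk : ∀ s : S, s * x = 0 ↔ ∃ c : S, s = c * y)
    {P : Type} [AddCommGroup P] [Module S P] (hP : Module.Projective S P)
    {p : P} (hp : x • p = 0) : ∃ q : P, p = y • q := by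
  obtain ⟨s, hs⟩ := Module.projective_def.mp hP
  have ht : ∀ a : P, (s p) a * x = 0 := by
    intro a
    have h1 : s (x • p) = 0 := by rw [hp, map_zero]
    have h2 : (x • s p) a = 0 := by rw [← map_smul, h1]; rfl
    rw [Finsupp.smul_apply, smul_eq_mul] at h2
    rw [mul_comm]; exact h2
  choose c hc using fun a => (hxk _).mp (ht a)
  refine ⟨∑ a ∈ (s p).support, c a • a, ?_⟩
  calc p = Finsupp.linearCombination S id (s p) := (hs p).symm
    _ = ∑ a ∈ (s p).support, (s p) a • a := by
        rw [Finsupp.linearCombination_apply, Finsupp.sum]; rfl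
    _ = y • ∑ a ∈ (s p).support, c a • a := by
        rw [Finset.smul_sum]
        refine Finset.sum_congr rfl fun a _ => ?_
        rw [hc a, mul_comm, mul_smul]

private lemma shift_lemma {x y : S}
    (hxk : ∀ s : S, s * x = 0 ↔ ∃ c : S, s = c * y)
    {P N : Type} [AddCommGroup P] [Module S P] [AddCommGroup N] [Module S N]
    (hP : Module.Projective S P) (f : P →ₗ[S] N) (hf : Function.Surjective f)
    (hker : ∀ k : P, f k = 0 → y • k = 0 → ∃ k' : P, f k' = 0 ∧ k = x • k')
    {m : N} (hm : x • m = 0) : ∃ m' : N, m = y • m' := by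
  have hyx : y * x = 0 := (hxk y).mpr ⟨1, (one_mul y).symm⟩
  obtain ⟨p, hpm⟩ := hf m
  have h1 : f (x • p) = 0 := by rw [map_smul, hpm, hm]
  have h2 : y • (x • p) = 0 := by rw [smul_smul, hyx, zero_smul]
  obtain ⟨k, hk0, hkx⟩ := hker _ h1 h2
  have h3 : x • (p - k) = 0 := by rw [smul_sub, hkx, sub_self]
  obtain ⟨q, hq⟩ := ann_smul_proj hxk hP h3
  refine ⟨f q, ?_⟩
  calc m = f p := hpm.symm
    _ = f (y • q + k) := by rw [← eq_add_of_sub_eq hq]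
    _ = y • f q + f k := by rw [map_add, map_smul]
    _ = y • f q := by rw [hk0, add_zero]

end Aux

/-- Let `S` be a Noetherian local ring and `(x, y)` a pair of exact zero-divisors in the maximal
ideal of `S`.  Then every nonzero finitely generated module `M` over `R = S/(x)` (equivalently,
a finitely generated `S`-module with `x • M = 0`) has infinite projective dimension over `S`:
there is no projective resolution of `M` over `S` which vanishes in all sufficiently high
degrees. -/
theorem stmt_6 (S : Type) [CommRing S] [IsNoetherianRing S] [IsLocalRing S] (x y : S)
    (hxm : x ∈ IsLocalRing.maximalIdeal S) (hym : y ∈ IsLocalRing.maximalIdeal S)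
    (hx : Ideal.torsionOf S S x = Ideal.span {y})
    (hy : Ideal.torsionOf S S y = Ideal.span {x})
    (M : Type) [AddCommGroup M] [Module S M] [Module.Finite S M] [Nontrivial M]
    (hxM : ∀ m : M, x • m = 0) :
    ¬ ∃ (P : ProjectiveResolution (ModuleCat.of S M)) (n : ℕ),
        ∀ i : ℕ, n ≤ i → Limits.IsZero (P.complex.X i) := by
  rintro ⟨P, n, hP⟩
  have key : ∀ (x' y' : S), Ideal.torsionOf S S x' = Ideal.span {y'} →
      ∀ s : S, s * x' = 0 ↔ ∃ c : S, s = c * y' := by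
    intro x' y' h s
    constructor
    · intro hs
      have : s ∈ Ideal.torsionOf S S x' := by
        rw [Ideal.mem_torsionOf_iff, smul_eq_mul]; exact hs
      rw [h, Ideal.mem_span_singleton'] at this
      obtain ⟨c, hc⟩ := this
      exact ⟨c, hc.symm⟩
    · rintro ⟨c, rfl⟩
      have hyx : y' * x' = 0 := by
        have h2 : y' ∈ Ideal.span {y'} := Ideal.mem_span_singleton_self y'
        rw [← h, Ideal.mem_torsionOf_iff, smul_eq_mul] at h2
        exact h2
      rw [mul_assoc, hyx, mul_zero]
  have hxk := key x y hx
  have hyk := key y x hy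
  clear key
  set C := P.complex with hC
  -- projectivity of the components, as modules
  have hproj : ∀ j : ℕ, Module.Projective S (C.X j) := by
    intro j
    have h := P.projective j
    exact (IsProjective.iff_projective (R := S) (P := (C.X j : Type))).mpr h
  -- the differentials as linear maps
  let dl : (j : ℕ) → ((C.X (j+1) : Type) →ₗ[S] (C.X j : Type)) := fun j => (C.d (j+1) j).hom
  let Bmem : (j : ℕ) → C.X j → Prop := fun j v => ∃ u, dl j u = v
  let Good : ℕ → Prop := fun j =>
    (∀ v : C.X j, Bmem j v → x • v = 0 → ∃ w, Bmem j w ∧ v = y • w) ∧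
    (∀ v : C.X j, Bmem j v → y • v = 0 → ∃ w, Bmem j w ∧ v = x • w)
  -- base case : Good j for j ≥ n
  have base : ∀ j : ℕ, n ≤ j → Good j := by
    intro j hj
    have hz : (C.d (j+1) j) = 0 := (hP (j+1) (le_trans hj (Nat.le_succ j))).eq_of_src _ _
    have hzero : ∀ v : C.X j, Bmem j v → v = 0 := by
      rintro v ⟨u, hu⟩
      rw [← hu]
      show (C.d (j+1) j).hom u = 0
      rw [hz]; rfl
    constructor <;>
    · intro v hv _
      refine ⟨0, ⟨0, map_zero _⟩, ?_⟩
      rw [hzero v hv, smul_zero]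
  -- descending step
  have step : ∀ j : ℕ, Good (j+1) → Good j := by
    intro j hg
    -- exactness at j+1
    have hex : ∀ k : C.X (j+1), dl j k = 0 → Bmem (j+1) k := by
      intro k hk
      have := (ShortComplex.moduleCat_exact_iff _).mp (P.exact_succ j) k hk
      exact this
    have hdd : ∀ u : C.X (j+2), dl j (dl (j+1) u) = 0 := by
      intro u
      have h : (C.d (j+2) (j+1) ≫ C.d (j+1) j) u = (0 : C.X (j+2) ⟶ C.X j) u := by
        rw [C.d_comp_d]
      exact h
    have main : ∀ (x' y' : S), (∀ s : S, s * x' = 0 ↔ ∃ c : S, s = c * y') →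
        (∀ v : C.X (j+1), Bmem (j+1) v → y' • v = 0 → ∃ w, Bmem (j+1) w ∧ v = x' • w) →
        (∀ v : C.X j, Bmem j v → x' • v = 0 → ∃ w, Bmem j w ∧ v = y' • w) := by
      intro x' y' hk hgood v hv hxv
      have hker' : ∀ kk : C.X (j+1), (dl j).rangeRestrict kk = 0 → y' • kk = 0 →
          ∃ k', (dl j).rangeRestrict k' = 0 ∧ kk = x' • k' := by
        intro k hk0 hyk0
        have hdk : dl j k = 0 := by
          have h6 := congrArg Subtype.val hk0
          simpa using h6
        obtain ⟨w, hwB, hwk⟩ := hgood k (hex k hdk) hyk0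
        refine ⟨w, Subtype.ext ?_, hwk⟩
        obtain ⟨u, hu⟩ := hwB
        show dl j w = _
        rw [← hu]
        simpa using hdd u
      have hvN : v ∈ LinearMap.range (dl j) := LinearMap.mem_range.mpr hv
      have hm : x' • (⟨v, hvN⟩ : LinearMap.range (dl j)) = 0 := Subtype.ext (by simpa using hxv)
      obtain ⟨m', hm'⟩ := shift_lemma hk (hproj (j+1)) ((dl j).rangeRestrict)
        (LinearMap.surjective_rangeRestrict _) hker' hm
      refine ⟨(m' : C.X j), LinearMap.mem_range.mp m'.2, ?_⟩
      have h5 := congrArg Subtype.val hm'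
      simpa using h5
    exact ⟨main x y hxk hg.2, main y x hyk hg.1⟩
  -- all degrees are good
  have down : ∀ (i j : ℕ), Good (j + i) → Good j := by
    intro i
    induction i with
    | zero => intro j h; exact h
    | succ i ih =>
        intro j h
        have h' : Good ((j+1) + i) := by
          have : (j+1) + i = j + (i+1) := by omega
          rw [this]; exact h
        exact step j (ih (j+1) h')
  have good0 : Good 0 := down n 0 (base (0 + n) (by omega))
  -- the augmentation
  let f0 : (C.X 0 : Type) →ₗ[S] M := (P.π.f 0).hom
  have hf0surj : Function.Surjective f0 := by
    have : Epi (P.π.f 0) := inferInstance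
    exact (ModuleCat.epi_iff_surjective (P.π.f 0)).mp this
  have hexact0 : ∀ k : C.X 0, f0 k = 0 → Bmem 0 k := by
    intro k hk
    exact (ShortComplex.moduleCat_exact_iff _).mp P.exact₀ k hk
  have hcomp0 : ∀ u : C.X 1, f0 (dl 0 u) = 0 := by
    intro u
    have h : (C.d 1 0 ≫ P.π.f 0) u
        = (0 : C.X 1 ⟶ ((ChainComplex.single₀ (ModuleCat S)).obj (ModuleCat.of S M)).X 0) u := by
      rw [P.complex_d_comp_π_f_zero]
    exact h
  have final : ∀ m : M, ∃ m' : M, m = y • m' := by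
    intro m
    apply shift_lemma hxk (hproj 0) f0 hf0surj ?_ (hxM m)
    intro k hk0 hyk0
    obtain ⟨w, hwB, hwk⟩ := good0.2 k (hexact0 k hk0) hyk0
    obtain ⟨u, hu⟩ := hwB
    exact ⟨w, by rw [← hu]; exact hcomp0 u, hwk⟩
  -- Nakayama
  have hle : (⊤ : Submodule S M) ≤ (Ideal.span {y}) • (⊤ : Submodule S M) := by
    intro m _
    obtain ⟨m', hm'⟩ := final m
    rw [hm']
    exact Submodule.smul_mem_smul (Ideal.mem_span_singleton_self y) trivial
  have hS : Nontrivial S := Module.nontrivial S M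
  have hjac : Ideal.span {y} ≤ (⊥ : Ideal S).jacobson := by
    rw [IsLocalRing.jacobson_eq_maximalIdeal ⊥ bot_ne_top]
    rwa [Ideal.span_le, Set.singleton_subset_iff]
  have htop : (⊤ : Submodule S M) = ⊥ :=
    Submodule.eq_bot_of_le_smul_of_le_jacobson_bot (Ideal.span {y}) ⊤
      (Module.Finite.fg_top) hle hjac
  obtain ⟨m, hm⟩ := exists_ne (0 : M)
  apply hm
  have : m ∈ (⊥ : Submodule S M) := htop ▸ Submodule.mem_top
  simpa using this
end

section
/- Let S be a commutative ring, x ∈ S with Ann_S(x) = (x), and R = S/(x). Let F, G be free S-modules and ∂̃₂ : F → G, ∂̃₁ : G → H be S-linear maps between free S-modules such that (∂̃₁ ∘ ∂̃₂)(F) ⊆ x·H. Then there exists an S-linear map s̃ : F → H with ∂̃₁ ∘ ∂̃₂ = x·s̃, and moreover the induced map s = s̃ ⊗_S R : F⊗R → H⊗R is independent of the choice of s̃. -/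
/-- Let `S` be a commutative ring, `x ∈ S` with `Ann_S(x) = (x)`, and let
`∂̃₂ : F → G`, `∂̃₁ : G → H` be `S`-linear maps between free `S`-modules such that the
composite `∂̃₁ ∘ ∂̃₂` takes values in `x • H`.  Then there exists an `S`-linear map
`s̃ : F → H` with `∂̃₁ ∘ ∂̃₂ = x • s̃`, and moreover any two such factorizations agree
modulo `x • H` (so the induced map `F ⊗ S/(x) → H ⊗ S/(x)` is independent of the choice). -/
theorem stmt_9 (S : Type*) [CommRing S] (x : S)
    (hx : Ideal.torsionOf S S x = Ideal.span {x})
    (F G H : Type*) [AddCommGroup F] [Module S F] [Module.Free S F]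
    [AddCommGroup G] [Module S G] [Module.Free S G]
    [AddCommGroup H] [Module S H] [Module.Free S H]
    (d₂ : F →ₗ[S] G) (d₁ : G →ₗ[S] H)
    (hd : ∀ v : F, d₁ (d₂ v) ∈ LinearMap.range (LinearMap.lsmul S H x)) :
    (∃ s : F →ₗ[S] H, d₁ ∘ₗ d₂ = x • s) ∧
    ∀ s t : F →ₗ[S] H, d₁ ∘ₗ d₂ = x • s → d₁ ∘ₗ d₂ = x • t →
      ∀ v : F, s v - t v ∈ LinearMap.range (LinearMap.lsmul S H x) := by
  classical
  constructor
  · set bF := Module.Free.chooseBasis S F with hbF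
    choose f hf using fun i => hd (bF i)
    refine ⟨bF.constr S f, bF.ext fun i => ?_⟩
    have := hf i
    simp only [LinearMap.lsmul_apply] at this
    simp [Module.Basis.constr_basis, ← this]
  · intro s t hs ht v
    have hst : x • s v = x • t v := by
      have h := hs.symm.trans ht
      have := congrArg (fun (f : F →ₗ[S] H) => f v) h
      simpa using this
    set w := s v - t v with hwdef
    have hw : x • w = 0 := by
      rw [hwdef, smul_sub, hst, sub_self]
    set bH := Module.Free.chooseBasis S H with hbH
    have hcoef : ∀ i, x ∣ bH.repr w i := by
      intro i
      have h0 : x * bH.repr w i = 0 := by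
        have := congrArg (fun c => bH.repr c i) hw
        simpa [map_smul, smul_eq_mul] using this
      have hmem : bH.repr w i ∈ Ideal.torsionOf S S x := by
        rw [Ideal.mem_torsionOf_iff, smul_eq_mul, mul_comm]
        exact h0
      rw [hx, Ideal.mem_span_singleton] at hmem
      exact hmem
    choose c hc using hcoef
    refine ⟨∑ i ∈ (bH.repr w).support, c i • bH i, ?_⟩
    have hrepr : w = ∑ i ∈ (bH.repr w).support, bH.repr w i • bH i := by
      conv_lhs => rw [← bH.linearCombination_repr w]
      rw [Finsupp.linearCombination_apply, Finsupp.sum]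
    simp only [LinearMap.lsmul_apply, Finset.smul_sum, smul_smul]
    refine Eq.trans (Finset.sum_congr rfl fun i _ => ?_) hrepr.symm
    rw [← (hc i)]
end

section
/- Let S be a commutative ring with x ∈ S satisfying Ann_S(x) = (x), and let R = S/(x). Let (F, ∂) be a chain complex of finitely generated free R-modules, and let (F̃, ∂̃) be a preimage over S (free S-modules with F̃ ⊗_S R ≅ F compatibly). Writing ∂̃_{i-1}∂̃_i = x·s̃_i and setting s_i = s̃_i ⊗_S R, the family s = {s_i} is a chain endomorphism of F of degree −2, i.e. s_{i-1} ∘ ∂_i = ∂_{i-2} ∘ s_i for all i. -/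
lemma free_ann_mem {S : Type*} [CommRing S] {x : S}
    (hx : Ideal.torsionOf S S x = Ideal.span {x})
    (M : Type*) [AddCommGroup M] [Module S M] [Module.Free S M]
    {w : M} (hw : x • w = 0) :
    w ∈ LinearMap.range (LinearMap.lsmul S M x) := by
  classical
  let b := Module.Free.chooseBasis S M
  have hcoef : ∀ j, ∃ c : S, b.repr w j = x * c := by
    intro j
    have h1 : x * b.repr w j = 0 := by
      have := congrArg (fun m => b.repr m j) hw
      simpa [map_smul, smul_eq_mul] using this
    have : b.repr w j ∈ Ideal.torsionOf S S x := by
      simp [Ideal.mem_torsionOf_iff, smul_eq_mul, mul_comm, h1]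
    rw [hx, Ideal.mem_span_singleton] at this
    obtain ⟨c, hc⟩ := this
    exact ⟨c, hc⟩
  choose c hc using hcoef
  refine ⟨(b.repr w).sum (fun j _ => c j • b j), ?_⟩
  rw [LinearMap.lsmul_apply, Finsupp.smul_sum]
  conv_rhs => rw [← b.linearCombination_repr w]
  rw [Finsupp.linearCombination_apply]
  refine Finsupp.sum_congr fun j hj => ?_
  rw [smul_smul, ← hc j, ]

/-- Let `S` be a commutative ring with `x ∈ S` satisfying `Ann_S(x) = (x)`.  Let `(F̃, ∂̃)` be a
preimage over `S` of a chain complex of finitely generated free `R = S/(x)`-modules: a family of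
finitely generated free `S`-modules `F̃ i` and `S`-linear maps `∂̃ i : F̃ i → F̃ (i-1)` whose
composites `∂̃ (i-1) ∘ ∂̃ i` factor as `x • s̃ i`.  Then the family `s = {s̃ i mod x}` is a chain
endomorphism of degree `-2` of the reduced complex: for all `i` and `v`,
`s̃ (i-1) (∂̃ i v) - ∂̃ (i-1-1) (s̃ i v) ∈ x • F̃ (i-1-1-1)`, i.e. `s_{i-1} ∘ ∂_i = ∂_{i-2} ∘ s_i`
over `R`. -/
theorem stmt_10 (S : Type*) [CommRing S] (x : S)
    (hx : Ideal.torsionOf S S x = Ideal.span {x})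
    (F : ℤ → Type*) [∀ i, AddCommGroup (F i)] [∀ i, Module S (F i)]
    [∀ i, Module.Free S (F i)] [∀ i, Module.Finite S (F i)]
    (d : ∀ i : ℤ, F i →ₗ[S] F (i - 1))
    (s : ∀ i : ℤ, F i →ₗ[S] F (i - 1 - 1))
    (hs : ∀ i : ℤ, (d (i - 1)) ∘ₗ (d i) = x • s i) :
    ∀ (i : ℤ) (v : F i),
      s (i - 1) (d i v) - d (i - 1 - 1) (s i v) ∈
        LinearMap.range (LinearMap.lsmul S (F (i - 1 - 1 - 1)) x) := by
  intro i v
  apply free_ann_mem hx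
  have h1 : x • s (i - 1) (d i v) = d (i - 1 - 1) (d (i - 1) (d i v)) := by
    have := congrArg (fun f => f (d i v)) (hs (i - 1))
    simpa using this.symm
  have h2 : x • d (i - 1 - 1) (s i v) = d (i - 1 - 1) (d (i - 1) (d i v)) := by
    have := congrArg (fun f => d (i - 1 - 1) (f v)) (hs i)
    simpa using this.symm
  rw [smul_sub, h1, h2, sub_self]
end

section
/- Let S = k[x,y,z]/(x²,y²,z²,yz) over a field k. Then (x̄, x̄) is a pair of exact zero-divisors in S: Ann_S(x̄) = (x̄), and S/(x̄) ≅ k[y,z]/(y,z)². -/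
set_option synthInstance.maxHeartbeats 1000000
set_option maxHeartbeats 1000000

open MvPolynomial

namespace Stmt19Aux

variable (k : Type) [Field k]

abbrev R3 := MvPolynomial (Fin 3) k
abbrev Q2 := MvPolynomial (Fin 2) k

noncomputable abbrev I3 : Ideal (R3 k) := Ideal.span {X 0 ^ 2, X 1 ^ 2, X 2 ^ 2, X 1 * X 2}
noncomputable abbrev J3 : Ideal (R3 k) := Ideal.span {X 0, X 1 ^ 2, X 2 ^ 2, X 1 * X 2}
noncomputable abbrev Jq : Ideal (Q2 k) := Ideal.span {X 0 ^ 2, X 0 * X 1, X 1 ^ 2}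

noncomputable def ev0 : R3 k →ₐ[k] Q2 k := aeval (Fin.cases 0 X)
noncomputable def σ3 : Q2 k →ₐ[k] R3 k := rename Fin.succ

example : (1 : Fin 3) = Fin.succ 0 := rfl
example : (2 : Fin 3) = Fin.succ 1 := rfl

lemma ev0_X0 : ev0 k (X 0) = 0 := by simp [ev0]
lemma ev0_X1 : ev0 k (X 1) = X 0 := by
  rw [ev0, aeval_X]; exact Fin.cases_succ 0
lemma ev0_X2 : ev0 k (X 2) = X 1 := by
  rw [ev0, aeval_X]; exact Fin.cases_succ 1

lemma ev0_σ3 (q : Q2 k) : ev0 k (σ3 k q) = q := by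
  rw [ev0, σ3, aeval_rename]
  have : (Fin.cases 0 X : Fin 3 → Q2 k) ∘ Fin.succ = X := by
    funext i; simp
  rw [this]
  simp [aeval_X_left_apply]

lemma sub_sigma_ev0_mem (f : R3 k) :
    f - σ3 k (ev0 k f) ∈ Ideal.span {(X 0 : R3 k)} := by
  induction f using MvPolynomial.induction_on with
  | C a => simp [ev0, σ3, algebraMap_eq]
  | add p q hp hq =>
      have h := Ideal.add_mem _ hp hq
      convert h using 1; rw [map_add, map_add]; ring
  | mul_X p i hp =>
      cases i using Fin.cases with
      | zero =>
          simp only [map_mul, ev0_X0, mul_zero, map_zero, sub_zero]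
          exact Ideal.mul_mem_left _ p (Ideal.subset_span rfl)
      | succ j =>
          have h1 : ev0 k (X j.succ) = X j := by simp [ev0]
          have h2 : σ3 k (X j : Q2 k) = X j.succ := by simp [σ3]
          rw [map_mul, map_mul, h1, h2]
          have : p * X j.succ - σ3 k (ev0 k p) * X j.succ
              = (p - σ3 k (ev0 k p)) * X j.succ := by ring
          rw [this]
          exact Ideal.mul_mem_right _ _ hp


noncomputable def eR : R3 k →+* Polynomial (Q2 k) :=
  ((finSuccEquiv k 2).toAlgHom : R3 k →ₐ[k] Polynomial (Q2 k)).toRingHom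

lemma eR_X0 : eR k (X 0) = Polynomial.X := finSuccEquiv_X_zero
lemma eR_X1 : eR k (X 1) = Polynomial.C (X 0) := by
  have : (X 1 : R3 k) = X (Fin.succ 0) := rfl
  rw [eR]; rw [this]; exact finSuccEquiv_X_succ
lemma eR_X2 : eR k (X 2) = Polynomial.C (X 1) := by
  have : (X 2 : R3 k) = X (Fin.succ 1) := rfl
  rw [eR]; rw [this]; exact finSuccEquiv_X_succ

lemma eR_σ3 (q : Q2 k) : eR k (σ3 k q) = Polynomial.C q := by
  have h : (eR k).comp (σ3 k).toRingHom
      = (Polynomial.CAlgHom (R := k) (A := Q2 k)).toRingHom := by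
    have : ((finSuccEquiv k 2).toAlgHom.comp (σ3 k) : Q2 k →ₐ[k] Polynomial (Q2 k))
        = Polynomial.CAlgHom := by
      apply MvPolynomial.algHom_ext
      intro i
      simp [σ3, Polynomial.CAlgHom, finSuccEquiv_X_succ]
    exact congrArg AlgHom.toRingHom this
  exact congrFun (congrArg DFunLike.coe h) q

lemma mapI : Ideal.map (eR k) (I3 k)
    = Ideal.span {(Polynomial.X : Polynomial (Q2 k)) ^ 2}
      ⊔ Ideal.map (Polynomial.C : Q2 k →+* Polynomial (Q2 k)) (Jq k) := by
  apply le_antisymm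
  · rw [Ideal.map_span, Ideal.span_le]
    rintro x hx
    simp only [Set.image_insert_eq, Set.image_singleton, Set.mem_insert_iff,
      Set.mem_singleton_iff] at hx
    rcases hx with rfl | rfl | rfl | rfl
    · rw [map_pow, eR_X0]
      exact Ideal.mem_sup_left (Ideal.subset_span rfl)
    · rw [map_pow, eR_X1, ← map_pow]
      exact Ideal.mem_sup_right (Ideal.mem_map_of_mem _
        (Ideal.subset_span (by simp)))
    · rw [map_pow, eR_X2, ← map_pow]
      exact Ideal.mem_sup_right (Ideal.mem_map_of_mem _
        (Ideal.subset_span (by simp)))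
    · rw [map_mul, eR_X1, eR_X2, ← map_mul]
      exact Ideal.mem_sup_right (Ideal.mem_map_of_mem _
        (Ideal.subset_span (by simp)))
  · apply sup_le
    · rw [Ideal.span_le]
      rintro x rfl
      have : (Polynomial.X : Polynomial (Q2 k)) ^ 2 = eR k (X 0 ^ 2) := by
        rw [map_pow, eR_X0]
      rw [this]
      exact Ideal.mem_map_of_mem _ (Ideal.subset_span (by simp))
    · rw [Ideal.map_span, Ideal.span_le]
      rintro x hx
      simp only [Set.image_insert_eq, Set.image_singleton, Set.mem_insert_iff,
        Set.mem_singleton_iff] at hx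
      rcases hx with rfl | rfl | rfl
      · have : Polynomial.C ((X 0 : Q2 k) ^ 2) = eR k (X 1 ^ 2) := by
          symm; rw [map_pow, eR_X1, ← map_pow]
        rw [this]
        exact Ideal.mem_map_of_mem _ (Ideal.subset_span (by simp))
      · have : Polynomial.C ((X 0 : Q2 k) * X 1) = eR k (X 1 * X 2) := by
          symm; rw [map_mul, eR_X1, eR_X2, ← map_mul]
        rw [this]
        exact Ideal.mem_map_of_mem _ (Ideal.subset_span (by simp))
      · have : Polynomial.C ((X 1 : Q2 k) ^ 2) = eR k (X 2 ^ 2) := by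
          symm; rw [map_pow, eR_X2, ← map_pow]
        rw [this]
        exact Ideal.mem_map_of_mem _ (Ideal.subset_span (by simp))


lemma coeff_lemma (q : Q2 k)
    (h : Polynomial.C q * Polynomial.X ∈
      Ideal.span {(Polynomial.X : Polynomial (Q2 k)) ^ 2}
        ⊔ Ideal.map (Polynomial.C : Q2 k →+* Polynomial (Q2 k)) (Jq k)) :
    q ∈ Jq k := by
  rw [Submodule.mem_sup] at h
  obtain ⟨a, ha, b, hb, hab⟩ := h
  rw [Ideal.mem_span_singleton'] at ha
  obtain ⟨t, rfl⟩ := ha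
  rw [Ideal.mem_map_C_iff] at hb
  have h1 := congrArg (fun p => Polynomial.coeff p 1) hab
  simp only [Polynomial.coeff_add, Polynomial.coeff_mul_X_pow',
    Polynomial.coeff_C_mul, Polynomial.coeff_X_one, mul_one] at h1
  rw [if_neg (by norm_num)] at h1
  rw [← h1, zero_add]
  exact hb 1

lemma key_forward (f : R3 k) (h : f * X 0 ∈ I3 k) : f ∈ J3 k := by
  have hs := sub_sigma_ev0_mem k f
  set q := ev0 k f with hq
  -- σ3 q * X 0 ∈ I3
  obtain ⟨t, ht⟩ := Ideal.mem_span_singleton'.mp hs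
  have hfact : σ3 k q * X 0 = f * X 0 - t * X 0 ^ 2 := by
    linear_combination (X 0 : R3 k) * ht
  have hmem : σ3 k q * X 0 ∈ I3 k := by
    rw [hfact]
    exact Ideal.sub_mem _ h (Ideal.mul_mem_left _ t (Ideal.subset_span (by simp)))
  have hq2 : q ∈ Jq k := by
    apply coeff_lemma
    rw [← mapI]
    have := Ideal.mem_map_of_mem (eR k) hmem
    rwa [map_mul, eR_σ3, eR_X0] at this
  -- conclude
  have hσ : σ3 k q ∈ J3 k := by
    have : σ3 k q ∈ Ideal.map (σ3 k).toRingHom (Jq k) :=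
      Ideal.mem_map_of_mem _ hq2
    rw [Ideal.map_span] at this
    refine Ideal.span_le.mpr ?_ this
    rintro x hx
    simp only [Set.image_insert_eq, Set.image_singleton, Set.mem_insert_iff,
      Set.mem_singleton_iff] at hx
    have h1 : σ3 k (X 0 : Q2 k) = X 1 := by
      rw [σ3]; simp only [rename_X]; rfl
    have h2 : σ3 k (X 1 : Q2 k) = X 2 := by
      rw [σ3]; simp only [rename_X]; rfl
    rcases hx with rfl | rfl | rfl
    · rw [map_pow]; erw [h1]
      exact Ideal.subset_span (by simp)
    · rw [map_mul]; erw [h1, h2]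
      exact Ideal.subset_span (by simp)
    · rw [map_pow]; erw [h2]
      exact Ideal.subset_span (by simp)
  have : f = (f - σ3 k q) + σ3 k q := by ring
  rw [this]
  exact Ideal.add_mem _
    (Ideal.span_le.mpr (by rintro x rfl; exact Ideal.subset_span (by simp)) hs) hσ


noncomputable def π : R3 k →ₐ[k] (Q2 k ⧸ Jq k) :=
  (Ideal.Quotient.mkₐ k (Jq k)).comp (ev0 k)

lemma π_surjective : Function.Surjective (π k) := by
  intro y
  obtain ⟨q, rfl⟩ := Ideal.Quotient.mk_surjective y
  exact ⟨σ3 k q, by simp [π, ev0_σ3]⟩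

lemma ker_π : RingHom.ker (π k).toRingHom = J3 k := by
  apply le_antisymm
  · intro f hf
    rw [RingHom.mem_ker] at hf
    have hf' : Ideal.Quotient.mk (Jq k) (ev0 k f) = 0 := hf
    rw [Ideal.Quotient.eq_zero_iff_mem] at hf'
    have hσ : σ3 k (ev0 k f) ∈ J3 k := by
      have : σ3 k (ev0 k f) ∈ Ideal.map (σ3 k).toRingHom (Jq k) :=
        Ideal.mem_map_of_mem _ hf'
      rw [Ideal.map_span] at this
      refine Ideal.span_le.mpr ?_ this
      rintro x hx
      simp only [Set.image_insert_eq, Set.image_singleton, Set.mem_insert_iff,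
        Set.mem_singleton_iff] at hx
      have h1 : σ3 k (X 0 : Q2 k) = X 1 := by rw [σ3]; simp only [rename_X]; rfl
      have h2 : σ3 k (X 1 : Q2 k) = X 2 := by rw [σ3]; simp only [rename_X]; rfl
      rcases hx with rfl | rfl | rfl
      · rw [map_pow]; erw [h1]; exact Ideal.subset_span (by simp)
      · rw [map_mul]; erw [h1, h2]; exact Ideal.subset_span (by simp)
      · rw [map_pow]; erw [h2]; exact Ideal.subset_span (by simp)
    have hd := sub_sigma_ev0_mem k f
    have : f = (f - σ3 k (ev0 k f)) + σ3 k (ev0 k f) := by ring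
    rw [this]
    refine Ideal.add_mem _ ?_ hσ
    exact Ideal.span_le.mpr (by rintro x rfl; exact Ideal.subset_span (by simp)) hd
  · rw [Ideal.span_le]
    rintro x hx
    simp only [Set.mem_insert_iff, Set.mem_singleton_iff] at hx
    have hz : ∀ g : R3 k, ev0 k g ∈ Jq k → g ∈ RingHom.ker (π k).toRingHom := by
      intro g hg
      rw [RingHom.mem_ker]
      show Ideal.Quotient.mk (Jq k) (ev0 k g) = 0
      rwa [Ideal.Quotient.eq_zero_iff_mem]
    rcases hx with rfl | rfl | rfl | rfl
    · apply hz; rw [ev0_X0]; exact Ideal.zero_mem _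
    · apply hz; rw [map_pow, ev0_X1]; exact Ideal.subset_span (by simp)
    · apply hz; rw [map_pow, ev0_X2]; exact Ideal.subset_span (by simp)
    · apply hz; rw [map_mul, ev0_X1, ev0_X2]; exact Ideal.subset_span (by simp)

lemma sup_eq : I3 k ⊔ Ideal.span {(X 0 : R3 k)} = J3 k := by
  apply le_antisymm
  · apply sup_le
    · rw [Ideal.span_le]
      rintro x hx
      simp only [Set.mem_insert_iff, Set.mem_singleton_iff] at hx
      rcases hx with rfl | rfl | rfl | rfl
      · rw [pow_two]
        exact Ideal.mul_mem_left _ _ (Ideal.subset_span (by simp))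
      · exact Ideal.subset_span (by simp)
      · exact Ideal.subset_span (by simp)
      · exact Ideal.subset_span (by simp)
    · rw [Ideal.span_le]
      rintro x rfl
      exact Ideal.subset_span (by simp)
  · rw [Ideal.span_le]
    rintro x hx
    simp only [Set.mem_insert_iff, Set.mem_singleton_iff] at hx
    rcases hx with rfl | rfl | rfl | rfl
    · exact Ideal.mem_sup_right (Ideal.subset_span rfl)
    · exact Ideal.mem_sup_left (Ideal.subset_span (by simp))
    · exact Ideal.mem_sup_left (Ideal.subset_span (by simp))
    · exact Ideal.mem_sup_left (Ideal.subset_span (by simp))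

end Stmt19Aux

open Stmt19Aux

/-- Let `S = k[x,y,z]/(x², y², z², yz)` over a field `k` and let `x̄` be the image of `x` in
`S`.  Then `(x̄, x̄)` is a pair of exact zero-divisors in `S`: `Ann_S(x̄) = (x̄)`; and moreover
`S/(x̄) ≅ k[y,z]/(y,z)² = k[y,z]/(y², yz, z²)` as `k`-algebras. -/
theorem stmt_19 (k : Type) [Field k]
    (S : Type) [CommRing S] [Algebra k S]
    (φ : (MvPolynomial (Fin 3) k ⧸
      Ideal.span {(MvPolynomial.X 0 : MvPolynomial (Fin 3) k) ^ 2,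
        (MvPolynomial.X 1 : MvPolynomial (Fin 3) k) ^ 2,
        (MvPolynomial.X 2 : MvPolynomial (Fin 3) k) ^ 2,
        (MvPolynomial.X 1 : MvPolynomial (Fin 3) k) * MvPolynomial.X 2}) ≃ₐ[k] S)
    (xb : S)
    (hxb : xb = φ (Ideal.Quotient.mk _ (MvPolynomial.X 0))) :
    Ideal.torsionOf S S xb = Ideal.span {xb} ∧
    Nonempty ((S ⧸ Ideal.span {xb}) ≃ₐ[k]
      (MvPolynomial (Fin 2) k ⧸
        Ideal.span {(MvPolynomial.X 0 : MvPolynomial (Fin 2) k) ^ 2,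
          (MvPolynomial.X 0 : MvPolynomial (Fin 2) k) * MvPolynomial.X 1,
          (MvPolynomial.X 1 : MvPolynomial (Fin 2) k) ^ 2})) := by
  subst hxb
  constructor
  · ext s
    rw [Ideal.mem_torsionOf_iff, smul_eq_mul]
    obtain ⟨a, rfl⟩ := φ.surjective s
    obtain ⟨f, rfl⟩ := Ideal.Quotient.mk_surjective a
    constructor
    · intro h
      have h0 : Ideal.Quotient.mk (I3 k) (f * X 0) = 0 := by
        apply φ.injective
        rw [map_zero]
        simp only [map_mul]
        exact h
      rw [Ideal.Quotient.eq_zero_iff_mem] at h0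
      have hf : f ∈ J3 k := key_forward k f h0
      rw [← sup_eq, Submodule.mem_sup] at hf
      obtain ⟨i, hi, c, hc, rfl⟩ := hf
      obtain ⟨t, rfl⟩ := Ideal.mem_span_singleton'.mp hc
      have : Ideal.Quotient.mk (I3 k) (i + t * X 0)
          = Ideal.Quotient.mk (I3 k) t * Ideal.Quotient.mk (I3 k) (X 0) := by
        rw [map_add, Ideal.Quotient.eq_zero_iff_mem.mpr hi, zero_add, map_mul]
      rw [this, map_mul]
      exact Ideal.mem_span_singleton'.mpr ⟨_, rfl⟩
    · intro h
      obtain ⟨c, hc⟩ := Ideal.mem_span_singleton'.mp h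
      obtain ⟨b, rfl⟩ := φ.surjective c
      obtain ⟨g, rfl⟩ := Ideal.Quotient.mk_surjective b
      have h1 : Ideal.Quotient.mk (I3 k) (g * X 0) = Ideal.Quotient.mk (I3 k) f := by
        apply φ.injective
        rw [← hc]
        simp only [map_mul]
      have h2 : Ideal.Quotient.mk (I3 k) (f * X 0) = 0 := by
        rw [map_mul, ← h1, ← map_mul, Ideal.Quotient.eq_zero_iff_mem]
        have : g * X 0 * X 0 = g * X 0 ^ 2 := by ring
        rw [this]
        exact Ideal.mul_mem_left _ g (Ideal.subset_span (by simp))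
      rw [← map_mul, ← map_mul, h2, map_zero]
  · refine ⟨?_⟩
    have iso1 : (S ⧸ Ideal.span {φ (Ideal.Quotient.mk (I3 k) (X 0))}) ≃ₐ[k]
        ((R3 k ⧸ I3 k) ⧸ Ideal.span {Ideal.Quotient.mk (I3 k) (X 0)}) :=
      Ideal.quotientEquivAlg _ _ φ.symm (by
        rw [Ideal.map_span, Set.image_singleton]
        simp)
    have heq : Ideal.span {Ideal.Quotient.mk (I3 k) (X 0)}
        = Ideal.map (Ideal.Quotient.mkₐ k (I3 k)) (Ideal.span {(X 0 : R3 k)}) := by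
      rw [Ideal.map_span, Set.image_singleton]
      rfl
    have iso2 : ((R3 k ⧸ I3 k) ⧸ Ideal.span {Ideal.Quotient.mk (I3 k) (X 0)}) ≃ₐ[k]
        (R3 k ⧸ (I3 k ⊔ Ideal.span {(X 0 : R3 k)})) :=
      (Ideal.quotientEquivAlgOfEq k heq).trans
        (DoubleQuot.quotQuotEquivQuotSupₐ k (I3 k) (Ideal.span {(X 0 : R3 k)}))
    have iso3 : (R3 k ⧸ (I3 k ⊔ Ideal.span {(X 0 : R3 k)})) ≃ₐ[k]
        (R3 k ⧸ RingHom.ker (π k).toRingHom) :=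
      Ideal.quotientEquivAlgOfEq k (by rw [ker_π, sup_eq])
    have iso4 : (R3 k ⧸ RingHom.ker (π k).toRingHom) ≃ₐ[k] (Q2 k ⧸ Jq k) :=
      Ideal.quotientKerAlgEquivOfSurjective (π_surjective k)
    exact iso1.trans (iso2.trans (iso3.trans iso4))
end
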